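/- For every isometry g of the Mukai lattice Λ̃ (extended ℂ-linearly to Λ̃ ⊗ ℂ), one has g(Q_alg) ∩ (exp(Λ ⊗ ℚ)·Q_alg) ≠ ∅: there exist x, y ∈ Λ ⊗ ℂ both satisfying the period conditions (x·x = 0, x·x̄ > 0, and there exists C ∈ Λ with C·x = 0 and C·C > 0; similarly for y), a rational class B ∈ Λ ⊗ ℚ, and a nonzero scalar λ ∈ ℂ, such that g((0,x,0)) = λ · exp(B)((0,y,0)) = λ · (0, y, B·y). -/

import Mathlib

open Matrix

noncomputable section

/-- Reindexing of `(Fin 8 ⊕ Fin 8) ⊕ Fin 2 × Fin 3` as `Fin 22`. -/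
def k3Index : ((Fin 8 ⊕ Fin 8) ⊕ Fin 2 × Fin 3) ≃ Fin 22 :=
  ((Equiv.sumCongr finSumFinEquiv finProdFinEquiv).trans finSumFinEquiv).trans
    (finCongr (by norm_num))

/-- The Gram matrix of the K3 lattice `Λ`: block diagonal with two copies of the
negative of the `E₈` Cartan matrix and three copies of the hyperbolic plane. -/
def K3Gram : Matrix (Fin 22) (Fin 22) ℤ :=
  Matrix.reindex k3Index k3Index
    (Matrix.fromBlocks
      (Matrix.fromBlocks (-CartanMatrix.E₈) 0 0 (-CartanMatrix.E₈)) 0 0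
      (Matrix.blockDiagonal fun _ : Fin 3 => !![0, 1; 1, 0]))

/-- The K3 intersection pairing, with coefficients extended to a commutative ring `R`. -/
def lamForm (R : Type) [CommRing R] (v w : Fin 22 → R) : R :=
  v ⬝ᵥ (K3Gram.map (Int.cast : ℤ → R)).mulVec w

/-- The Mukai pairing on `Λ̃ ⊗ R = R ⊕ (Λ ⊗ R) ⊕ R`:
`⟨(r,c,s),(r',c',s')⟩ = c·c' - r*s' - r'*s`. -/
def mukaiPair (R : Type) [CommRing R] (v w : R × (Fin 22 → R) × R) : R :=
  lamForm R v.2.1 w.2.1 - v.1 * w.2.2 - w.1 * v.2.2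

/-- The B-field shift `exp(B) : (r,c,s) ↦ (r, c + r·B, s + B·c + (B·B/2)·r)`. -/
def mukaiExp (R : Type) [Field R] (B : Fin 22 → R) (v : R × (Fin 22 → R) × R) :
    R × (Fin 22 → R) × R :=
  (v.1, v.2.1 + v.1 • B, v.2.2 + lamForm R B v.2.1 + lamForm R B B / 2 * v.1)

/-- Coercion of an integral class in `Λ` to `Λ ⊗ ℂ`. -/
def intVecC (v : Fin 22 → ℤ) : Fin 22 → ℂ := fun i => (v i : ℂ)

/-- Coercion of a rational class in `Λ ⊗ ℚ` to `Λ ⊗ ℂ`. -/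
def ratVecC (v : Fin 22 → ℚ) : Fin 22 → ℂ := fun i => (v i : ℂ)

/-- Componentwise complex conjugation on `Λ ⊗ ℂ`. -/
def conjVec (x : Fin 22 → ℂ) : Fin 22 → ℂ := fun i => (starRingEnd ℂ) (x i)

/-- `x ∈ Λ ⊗ ℂ` is a period point: `x·x = 0` and `x·x̄ > 0`. -/
def IsPeriod (x : Fin 22 → ℂ) : Prop :=
  lamForm ℂ x x = 0 ∧ 0 < (lamForm ℂ x (conjVec x)).re

/-- `x` is an algebraic period point: a period point admitting an integral class `C`
with `C·x = 0` and `C·C > 0`. -/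
def IsAlgPeriod (x : Fin 22 → ℂ) : Prop :=
  IsPeriod x ∧ ∃ C : Fin 22 → ℤ, lamForm ℂ (intVecC C) x = 0 ∧ 0 < lamForm ℤ C C

/-- The embedding of the integral Mukai lattice `Λ̃` into `Λ̃ ⊗ ℂ`. -/
def iMukai (m : ℤ × (Fin 22 → ℤ) × ℤ) : ℂ × (Fin 22 → ℂ) × ℂ :=
  ((m.1 : ℂ), intVecC m.2.1, (m.2.2 : ℂ))

section auxHelpers
open Finset

lemma key3 (d₁ d₂ : Fin 3 → ℚ) :
    ∃ c : Fin 3 → ℚ, c ≠ 0 ∧ (∑ k, c k * d₁ k) = 0 ∧ (∑ k, c k * d₂ k) = 0 := by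
  let f : (Fin 3 → ℚ) →ₗ[ℚ] ℚ × ℚ :=
    { toFun := fun c => (c ⬝ᵥ d₁, c ⬝ᵥ d₂)
      map_add' := by intro a b; simp [add_dotProduct]
      map_smul' := by intro a b; simp [smul_dotProduct] }
  have hk : LinearMap.ker f ≠ ⊥ := by
    apply LinearMap.ker_ne_bot_of_finrank_lt (f := f)
    simp
  obtain ⟨c, hc, hc0⟩ := Submodule.ne_bot_iff _ |>.mp hk
  have h1 : c ⬝ᵥ d₁ = 0 ∧ c ⬝ᵥ d₂ = 0 := by
    have := (LinearMap.mem_ker.mp hc)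
    simpa [f, Prod.ext_iff] using this
  exact ⟨c, hc0, h1.1, h1.2⟩

lemma sumsq_pos {c : Fin 3 → ℚ} (hc : c ≠ 0) : 0 < ∑ k, c k * c k := by
  obtain ⟨k, hk⟩ := Function.ne_iff.mp hc
  exact Finset.sum_pos' (fun i _ => mul_self_nonneg _) ⟨k, Finset.mem_univ k, mul_self_pos.mpr hk⟩

lemma exists_int_scale {n : ℕ} (v : Fin n → ℚ) :
    ∃ (N : ℤ) (w : Fin n → ℤ), 0 < N ∧ ∀ i, (w i : ℚ) = (N : ℚ) * v i := by
  refine ⟨∏ j, ((v j).den : ℤ), fun i => (v i).num * ∏ j ∈ Finset.univ.erase i, ((v j).den : ℤ),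
    Finset.prod_pos fun j _ => by exact_mod_cast (v j).pos, fun i => ?_⟩
  push_cast
  rw [← Finset.mul_prod_erase (Finset.univ) (fun j => ((v j).den : ℚ)) (Finset.mem_univ i),
    mul_comm ((v i).den : ℚ), mul_assoc, mul_comm ((v i).den : ℚ), Rat.mul_den_eq_num,
    mul_comm]


def ia (k : Fin 3) : Fin 22 := ⟨16 + k.val, by omega⟩
def ib (k : Fin 3) : Fin 22 := ⟨19 + k.val, by omega⟩

set_option maxRecDepth 10000 in
lemma grow : ∀ (k : Fin 3) (j : Fin 22), K3Gram (ia k) j + K3Gram (ib k) j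
    = (if j = ia k then 1 else 0) + (if j = ib k then 1 else 0) := by decide

variable (R : Type) [CommRing R]

def uVec (k : Fin 3) : Fin 22 → R := Pi.single (ia k) 1 + Pi.single (ib k) 1

lemma lamForm_u (k : Fin 3) (v : Fin 22 → R) :
    lamForm R (uVec R k) v = v (ia k) + v (ib k) := by
  unfold lamForm uVec
  rw [add_dotProduct, single_dotProduct, single_dotProduct, one_mul, one_mul]
  have h : ∀ i : Fin 22, (K3Gram.map (Int.cast : ℤ → R)).mulVec v i
      = ∑ j, ((K3Gram i j : R)) * v j := by
    intro i; simp [Matrix.mulVec, dotProduct, Matrix.map_apply]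
  rw [h, h, ← Finset.sum_add_distrib]
  have h2 : ∀ j : Fin 22, ((K3Gram (ia k) j : R)) * v j + ((K3Gram (ib k) j : R)) * v j
      = ((if j = ia k then (1:R) else 0) + (if j = ib k then 1 else 0)) * v j := by
    intro j
    rw [← add_mul]
    congr 1
    have hg := congrArg (fun z : ℤ => (z : R)) (grow k j)
    simp only [Int.cast_add, apply_ite (Int.cast : ℤ → R), Int.cast_one, Int.cast_zero] at hg
    exact hg
  rw [Finset.sum_congr rfl fun j _ => h2 j]
  have hab : ia k ≠ ib k := by
    simp [ia, ib, Fin.ext_iff]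
  simp [add_mul, Finset.sum_add_distrib, ite_mul]

def phiV (c : Fin 3 → R) : Fin 22 → R := ∑ k, c k • uVec R k

lemma lamForm_sum_smul (c : Fin 3 → R) (w : Fin 3 → Fin 22 → R) (v : Fin 22 → R) :
    lamForm R (∑ k, c k • w k) v = ∑ k, c k * lamForm R (w k) v := by
  unfold lamForm
  simp only [dotProduct, Finset.sum_apply, Pi.smul_apply, smul_eq_mul, Finset.sum_mul,
    Finset.mul_sum]
  rw [Finset.sum_comm]
  exact Finset.sum_congr rfl fun k _ => Finset.sum_congr rfl fun i _ => mul_assoc _ _ _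

lemma lamForm_phi (c : Fin 3 → R) (v : Fin 22 → R) :
    lamForm R (phiV R c) v = ∑ k, c k * (v (ia k) + v (ib k)) := by
  unfold phiV
  rw [lamForm_sum_smul]
  exact Finset.sum_congr rfl fun k _ => by rw [lamForm_u]

lemma phi_apply_ia (c : Fin 3 → R) (k : Fin 3) : phiV R c (ia k) = c k := by
  fin_cases k <;>
    simp (config := { decide := true })
      [phiV, uVec, Finset.sum_apply, Pi.single_apply, Fin.sum_univ_three, ia, ib]

lemma phi_apply_ib (c : Fin 3 → R) (k : Fin 3) : phiV R c (ib k) = c k := by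
  fin_cases k <;>
    simp (config := { decide := true })
      [phiV, uVec, Finset.sum_apply, Pi.single_apply, Fin.sum_univ_three, ia, ib]

lemma lamForm_phi_phi (c c' : Fin 3 → R) :
    lamForm R (phiV R c) (phiV R c') = 2 * ∑ k, c k * c' k := by
  rw [lamForm_phi]
  rw [Finset.mul_sum]
  exact Finset.sum_congr rfl fun k _ => by
    rw [phi_apply_ia, phi_apply_ib]; ring

lemma lamForm_map {R S : Type} [CommRing R] [CommRing S] (f : R →+* S) (v w : Fin 22 → R) :
    lamForm S (fun i => f (v i)) (fun i => f (w i)) = f (lamForm R v w) := by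
  simp [lamForm, dotProduct, Matrix.mulVec, map_sum, _root_.map_mul, Matrix.map_apply, map_intCast]

-- bilinear expansion lemmas
lemma lamForm_add_smul_left (v w z : Fin 22 → R) (a : R) :
    lamForm R (v + a • w) z = lamForm R v z + a * lamForm R w z := by
  simp [lamForm, add_dotProduct, smul_dotProduct]

lemma lamForm_add_smul_right (v w z : Fin 22 → R) (b : R) :
    lamForm R v (w + b • z) = lamForm R v w + b * lamForm R v z := by
  simp [lamForm, Matrix.mulVec_add, Matrix.mulVec_smul, dotProduct_add, dotProduct_smul]


lemma lamForm_intC (v w : Fin 22 → ℤ) :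
    lamForm ℂ (intVecC v) (intVecC w) = ((lamForm ℤ v w : ℤ) : ℂ) :=
  lamForm_map (Int.castRingHom ℂ) v w

lemma lamForm_ratC (v w : Fin 22 → ℚ) :
    lamForm ℂ (ratVecC v) (ratVecC w) = ((lamForm ℚ v w : ℚ) : ℂ) :=
  lamForm_map (Rat.castHom ℂ) v w

lemma lamForm_intQ (v w : Fin 22 → ℤ) :
    lamForm ℚ (fun i => ((v i : ℚ))) (fun i => ((w i : ℚ))) = ((lamForm ℤ v w : ℤ) : ℚ) :=
  lamForm_map (Int.castRingHom ℚ) v w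

-- the standard period construction
lemma period_of (v w : Fin 22 → ℤ) (s1 s2 : ℚ) (hs1 : 0 < s1) (hs2 : 0 < s2)
    (hvv : ((lamForm ℤ v v : ℤ) : ℚ) = 2 * s1) (hww : ((lamForm ℤ w w : ℤ) : ℚ) = 2 * s2)
    (hvw : lamForm ℤ v w = 0) (hwv : lamForm ℤ w v = 0) :
    IsPeriod (intVecC v + (((Real.sqrt ((s1/s2 : ℚ) : ℝ) : ℝ) : ℂ) * Complex.I) • intVecC w) := by
  have hs2c : (s2 : ℂ) ≠ 0 := by exact_mod_cast ne_of_gt hs2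
  set μ : ℝ := Real.sqrt ((s1/s2 : ℚ) : ℝ) with hμ
  set m : ℂ := ((μ : ℝ) : ℂ) * Complex.I with hm
  have hμsq : (μ : ℝ) ^ 2 = ((s1/s2 : ℚ) : ℝ) := by
    rw [hμ, Real.sq_sqrt]
    positivity
  have hmsq : m * m = -((s1/s2 : ℚ) : ℂ) := by
    calc m * m = (((μ:ℝ):ℂ) * ((μ:ℝ):ℂ)) * (Complex.I * Complex.I) := by rw [hm]; ring
      _ = -((s1/s2 : ℚ) : ℂ) := by
          rw [Complex.I_mul_I, ← Complex.ofReal_mul, ← sq, hμsq, Complex.ofReal_ratCast]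
          ring
  have h1 : ((lamForm ℤ v v : ℤ):ℂ) = 2 * (s1 : ℂ) := by
    have : ((lamForm ℤ v v : ℤ):ℚ) = 2*s1 := hvv
    push_cast [← this]
    norm_cast
  have h2 : ((lamForm ℤ w w : ℤ):ℂ) = 2 * (s2 : ℂ) := by
    have : ((lamForm ℤ w w : ℤ):ℚ) = 2*s2 := hww
    push_cast [← this]
    norm_cast
  have hmsq' : m * m * (s2:ℂ) = -(s1:ℂ) := by
    rw [hmsq]; push_cast; field_simp
  constructor
  · rw [lamForm_add_smul_left, lamForm_add_smul_right, lamForm_add_smul_right,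
      lamForm_intC, lamForm_intC, lamForm_intC, lamForm_intC, hvw, hwv, h1, h2]
    push_cast
    linear_combination 2 * hmsq'
  · have hconj : conjVec (intVecC v + m • intVecC w) = intVecC v + (-m) • intVecC w := by
      funext i
      simp only [conjVec, Pi.add_apply, Pi.smul_apply, intVecC, smul_eq_mul, map_add,
        _root_.map_mul, map_intCast, hm, Complex.conj_I, Complex.conj_ofReal]
      ring
    rw [hconj, lamForm_add_smul_left, lamForm_add_smul_right, lamForm_add_smul_right,
      lamForm_intC, lamForm_intC, lamForm_intC, lamForm_intC, hvw, hwv, h1, h2]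
    push_cast
    have hre : (2 * (s1:ℂ) + -m * 0 + m * (0 + -m * (2 * (s2:ℂ)))) = ((4*s1 : ℚ):ℂ) := by
      push_cast
      linear_combination (-2:ℂ) * hmsq'
    rw [hre, Complex.ratCast_re]
    exact_mod_cast (by linarith : (0:ℚ) < 4*s1)



lemma lamForm_smul_left (a : R) (v w : Fin 22 → R) :
    lamForm R (a • v) w = a * lamForm R v w := by
  simp [lamForm, smul_dotProduct]

lemma lamForm_zero_right (v : Fin 22 → R) : lamForm R v 0 = 0 := by
  simp [lamForm]

lemma mukaiPair_iMukai (m m' : ℤ × (Fin 22 → ℤ) × ℤ) :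
    mukaiPair ℂ (iMukai m) (iMukai m') = ((mukaiPair ℤ m m' : ℤ) : ℂ) := by
  obtain ⟨r, c, s⟩ := m; obtain ⟨r', c', s'⟩ := m'
  simp only [mukaiPair, iMukai]
  rw [lamForm_intC]
  push_cast
  ring

lemma sumsq_pos_int {c : Fin 3 → ℤ} (hc : c ≠ 0) : 0 < ∑ k, c k * c k := by
  obtain ⟨k, hk⟩ := Function.ne_iff.mp hc
  exact Finset.sum_pos' (fun i _ => mul_self_nonneg _) ⟨k, Finset.mem_univ k, mul_self_pos.mpr hk⟩

lemma scaled_ne {v : Fin 3 → ℚ} {N : ℤ} {w : Fin 3 → ℤ} (hN : 0 < N)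
    (h : ∀ i, (w i : ℚ) = (N : ℚ) * v i) (hv : v ≠ 0) : w ≠ 0 := by
  intro hw0
  apply hv
  funext i
  have := h i
  rw [hw0] at this
  simp only [Pi.zero_apply, Int.cast_zero] at this
  have hN' : (N : ℚ) ≠ 0 := by exact_mod_cast ne_of_gt hN
  field_simp at this
  exact (mul_eq_zero.mp this.symm).resolve_left hN'

lemma phi_pair_zero (w : Fin 3 → ℤ) (v : Fin 22 → ℤ) (v0 : Fin 3 → ℚ) (N : ℤ)
    (h : ∀ i, (w i : ℚ) = (N : ℚ) * v0 i)
    (hz : ∑ k, v0 k * ((v (ia k) : ℚ) + (v (ib k) : ℚ)) = 0) :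
    lamForm ℤ (phiV ℤ w) v = 0 := by
  rw [lamForm_phi]
  have hq : ((∑ k, w k * (v (ia k) + v (ib k)) : ℤ) : ℚ)
      = (N : ℚ) * ∑ k, v0 k * ((v (ia k) : ℚ) + (v (ib k) : ℚ)) := by
    push_cast
    rw [Finset.mul_sum]
    exact Finset.sum_congr rfl fun k _ => by rw [h k]; ring
  rw [hz, mul_zero] at hq
  exact_mod_cast hq

lemma phi_phi_zero (w w' : Fin 3 → ℤ) (v0 v0' : Fin 3 → ℚ) (N N' : ℤ)
    (h : ∀ i, (w i : ℚ) = (N : ℚ) * v0 i) (h' : ∀ i, (w' i : ℚ) = (N' : ℚ) * v0' i)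
    (hz : ∑ k, v0 k * v0' k = 0) :
    lamForm ℤ (phiV ℤ w) (phiV ℤ w') = 0 := by
  rw [lamForm_phi_phi]
  have hq : ((∑ k, w k * w' k : ℤ) : ℚ) = ((N : ℚ) * N') * ∑ k, v0 k * v0' k := by
    push_cast
    rw [Finset.mul_sum]
    exact Finset.sum_congr rfl fun k _ => by rw [h k, h' k]; ring
  rw [hz, mul_zero] at hq
  have : (∑ k, w k * w' k : ℤ) = 0 := by exact_mod_cast hq
  rw [this, mul_zero]

lemma ortho_period (C v w : Fin 22 → ℤ) (m : ℂ)
    (h1 : lamForm ℤ C v = 0) (h2 : lamForm ℤ C w = 0) :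
    lamForm ℂ (intVecC C) (intVecC v + m • intVecC w) = 0 := by
  rw [lamForm_add_smul_right, lamForm_intC, lamForm_intC, h1, h2]
  simp


end auxHelpers


/-- For every isometry `g` of the Mukai lattice `Λ̃` (given as an isometry of `Λ̃ ⊗ ℂ`
preserving the integral lattice in both directions) one has
`g(Q_alg) ∩ (exp(Λ ⊗ ℚ)·Q_alg) ≠ ∅`: there are algebraic period points `x, y`, a rational
class `B ∈ Λ ⊗ ℚ` and a nonzero scalar `λ` with `g((0,x,0)) = λ·(0, y, B·y)`. -/
theorem isometry_meets_twisted_alg_periods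
    (g : (ℂ × (Fin 22 → ℂ) × ℂ) ≃ₗ[ℂ] ℂ × (Fin 22 → ℂ) × ℂ)
    (hiso : ∀ v w, mukaiPair ℂ (g v) (g w) = mukaiPair ℂ v w)
    (hint : ∀ m : ℤ × (Fin 22 → ℤ) × ℤ, ∃ m' : ℤ × (Fin 22 → ℤ) × ℤ, g (iMukai m) = iMukai m')
    (hint' : ∀ m : ℤ × (Fin 22 → ℤ) × ℤ, ∃ m' : ℤ × (Fin 22 → ℤ) × ℤ,
      g.symm (iMukai m) = iMukai m') :
    ∃ (x y : Fin 22 → ℂ) (B : Fin 22 → ℚ) (lam : ℂ),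
      lam ≠ 0 ∧ IsAlgPeriod x ∧ IsAlgPeriod y ∧
      g ((0 : ℂ), x, (0 : ℂ)) = lam • ((0 : ℂ), y, lamForm ℂ (ratVecC B) y) := by
  classical
  -- pairing transfer
  have pairZ : ∀ (m m' n n' : ℤ × (Fin 22 → ℤ) × ℤ), g (iMukai m) = iMukai n →
      g (iMukai m') = iMukai n' → mukaiPair ℤ n n' = mukaiPair ℤ m m' := by
    intro m m' n n' h h'
    have h2 := hiso (iMukai m) (iMukai m')
    rw [h, h', mukaiPair_iMukai, mukaiPair_iMukai] at h2
    exact_mod_cast h2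
  obtain ⟨⟨r₀, c₀, s₀⟩, h₀⟩ := hint' ((0 : ℤ), (0 : Fin 22 → ℤ), (1 : ℤ))
  have h₀' : g (iMukai (r₀, c₀, s₀)) = iMukai ((0:ℤ), (0 : Fin 22 → ℤ), (1:ℤ)) := by
    rw [← h₀]; exact g.apply_symm_apply _
  -- first-component vanishing criterion
  have hR : ∀ (v : Fin 22 → ℤ) (n : ℤ × (Fin 22 → ℤ) × ℤ),
      g (iMukai ((0:ℤ), v, (0:ℤ))) = iMukai n → lamForm ℤ v c₀ = 0 → n.1 = 0 := by
    intro v n hvn hvc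
    have h2 := pairZ ((0:ℤ), v, (0:ℤ)) (r₀, c₀, s₀) n ((0:ℤ), (0 : Fin 22 → ℤ), (1:ℤ)) hvn h₀'
    simp only [mukaiPair, lamForm_zero_right, hvc] at h2
    omega
  -- choice of the rational 2-plane orthogonal to c₀
  set d : Fin 3 → ℚ := fun k => ((c₀ (ia k) : ℚ) + (c₀ (ib k) : ℚ)) with hd
  obtain ⟨ce₀, hce₀ne, hce₀d, -⟩ := key3 d d
  obtain ⟨cf₀, hcf₀ne, hcf₀d, hcf₀e⟩ := key3 d ce₀
  obtain ⟨cg₀, hcg₀ne, hcg₀e, hcg₀f⟩ := key3 ce₀ cf₀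
  obtain ⟨Ne, ce, hNe, hce⟩ := exists_int_scale ce₀
  obtain ⟨Nf, cf, hNf, hcf⟩ := exists_int_scale cf₀
  obtain ⟨Ng, cg, hNg, hcg⟩ := exists_int_scale cg₀
  have hcene : ce ≠ 0 := scaled_ne hNe hce hce₀ne
  have hcfne : cf ≠ 0 := scaled_ne hNf hcf hcf₀ne
  have hcgne : cg ≠ 0 := scaled_ne hNg hcg hcg₀ne
  set e : Fin 22 → ℤ := phiV ℤ ce with he
  set f : Fin 22 → ℤ := phiV ℤ cf with hf
  set Cx : Fin 22 → ℤ := phiV ℤ cg with hCx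
  -- integral pairings of e, f, Cx
  set seZ : ℤ := ∑ k, ce k * ce k with hseZ
  set sfZ : ℤ := ∑ k, cf k * cf k with hsfZ
  have hseZpos : 0 < seZ := sumsq_pos_int hcene
  have hsfZpos : 0 < sfZ := sumsq_pos_int hcfne
  have he_e : lamForm ℤ e e = 2 * seZ := lamForm_phi_phi ℤ ce ce
  have hf_f : lamForm ℤ f f = 2 * sfZ := lamForm_phi_phi ℤ cf cf
  have hef₀ : ∑ k, ce₀ k * cf₀ k = 0 := by
    rw [← hcf₀e]; exact Finset.sum_congr rfl fun k _ => mul_comm _ _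
  have he_f : lamForm ℤ e f = 0 := phi_phi_zero ce cf ce₀ cf₀ Ne Nf hce hcf hef₀
  have hf_e : lamForm ℤ f e = 0 := phi_phi_zero cf ce cf₀ ce₀ Nf Ne hcf hce hcf₀e
  have hC_e : lamForm ℤ Cx e = 0 := phi_phi_zero cg ce cg₀ ce₀ Ng Ne hcg hce hcg₀e
  have hC_f : lamForm ℤ Cx f = 0 := phi_phi_zero cg cf cg₀ cf₀ Ng Nf hcg hcf hcg₀f
  have hC_C : 0 < lamForm ℤ Cx Cx := by
    rw [lamForm_phi_phi]
    have := sumsq_pos_int hcgne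
    omega
  have he_c0 : lamForm ℤ e c₀ = 0 := phi_pair_zero ce c₀ ce₀ Ne hce hce₀d
  have hf_c0 : lamForm ℤ f c₀ = 0 := phi_pair_zero cf c₀ cf₀ Nf hcf hcf₀d
  -- the scalar
  set s1 : ℚ := (seZ : ℚ) with hs1d
  set s2 : ℚ := (sfZ : ℚ) with hs2d
  have hs1 : 0 < s1 := by rw [hs1d]; exact_mod_cast hseZpos
  have hs2 : 0 < s2 := by rw [hs2d]; exact_mod_cast hsfZpos
  set mS : ℂ := ((Real.sqrt ((s1/s2 : ℚ) : ℝ) : ℝ) : ℂ) * Complex.I with hmS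
  set x : Fin 22 → ℂ := intVecC e + mS • intVecC f with hx
  -- x is an algebraic period
  have hPx : IsPeriod x := by
    rw [hx, hmS]
    exact period_of e f s1 s2 hs1 hs2 (by rw [he_e]; push_cast; ring)
      (by rw [hf_f]; push_cast; ring) he_f hf_e
  have hAx : IsAlgPeriod x :=
    ⟨hPx, Cx, by rw [hx]; exact ortho_period Cx e f mS hC_e hC_f, hC_C⟩
  -- images of e and f
  obtain ⟨⟨R₁, A, P₁⟩, hgE⟩ := hint ((0:ℤ), e, (0:ℤ))
  obtain ⟨⟨R₂, Bv, Q₁⟩, hgF⟩ := hint ((0:ℤ), f, (0:ℤ))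
  have hR₁ : R₁ = 0 := hR e (R₁, A, P₁) hgE he_c0
  have hR₂ : R₂ = 0 := hR f (R₂, Bv, Q₁) hgF hf_c0
  subst hR₁; subst hR₂
  -- integral pairings of A, Bv
  have hAA : lamForm ℤ A A = 2 * seZ := by
    have h2 := pairZ ((0:ℤ), e, (0:ℤ)) ((0:ℤ), e, (0:ℤ)) ((0:ℤ), A, P₁) ((0:ℤ), A, P₁) hgE hgE
    simp only [mukaiPair] at h2
    rw [he_e] at h2
    omega
  have hBB : lamForm ℤ Bv Bv = 2 * sfZ := by
    have h2 := pairZ ((0:ℤ), f, (0:ℤ)) ((0:ℤ), f, (0:ℤ)) ((0:ℤ), Bv, Q₁) ((0:ℤ), Bv, Q₁) hgF hgF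
    simp only [mukaiPair] at h2
    rw [hf_f] at h2
    omega
  have hAB : lamForm ℤ A Bv = 0 := by
    have h2 := pairZ ((0:ℤ), e, (0:ℤ)) ((0:ℤ), f, (0:ℤ)) ((0:ℤ), A, P₁) ((0:ℤ), Bv, Q₁) hgE hgF
    simp only [mukaiPair] at h2
    rw [he_f] at h2
    omega
  have hBA : lamForm ℤ Bv A = 0 := by
    have h2 := pairZ ((0:ℤ), f, (0:ℤ)) ((0:ℤ), e, (0:ℤ)) ((0:ℤ), Bv, Q₁) ((0:ℤ), A, P₁) hgF hgE
    simp only [mukaiPair] at h2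
    rw [hf_e] at h2
    omega
  set y : Fin 22 → ℂ := intVecC A + mS • intVecC Bv with hy
  have hPy : IsPeriod y := by
    rw [hy, hmS]
    exact period_of A Bv s1 s2 hs1 hs2 (by rw [hAA]; push_cast; ring)
      (by rw [hBB]; push_cast; ring) hAB hBA
  -- algebraic class for y
  set dA : Fin 3 → ℚ := fun k => ((A (ia k) : ℚ) + (A (ib k) : ℚ)) with hdA
  set dB : Fin 3 → ℚ := fun k => ((Bv (ia k) : ℚ) + (Bv (ib k) : ℚ)) with hdB
  obtain ⟨cy₀, hcy₀ne, hcy₀A, hcy₀B⟩ := key3 dA dB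
  obtain ⟨Ny, cy, hNy, hcy⟩ := exists_int_scale cy₀
  have hcyne : cy ≠ 0 := scaled_ne hNy hcy hcy₀ne
  set Cy : Fin 22 → ℤ := phiV ℤ cy with hCy
  have hCy_A : lamForm ℤ Cy A = 0 := phi_pair_zero cy A cy₀ Ny hcy hcy₀A
  have hCy_B : lamForm ℤ Cy Bv = 0 := phi_pair_zero cy Bv cy₀ Ny hcy hcy₀B
  have hCy_Cy : 0 < lamForm ℤ Cy Cy := by
    rw [lamForm_phi_phi]
    have := sumsq_pos_int hcyne
    omega
  have hAy : IsAlgPeriod y :=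
    ⟨hPy, Cy, by rw [hy]; exact ortho_period Cy A Bv mS hCy_A hCy_B, hCy_Cy⟩
  -- the B-field
  set p : ℚ := (P₁ : ℚ) / (2 * (seZ : ℚ)) with hp
  set q : ℚ := (Q₁ : ℚ) / (2 * (sfZ : ℚ)) with hq
  set Aq : Fin 22 → ℚ := fun i => ((A i : ℚ)) with hAq
  set Bq : Fin 22 → ℚ := fun i => ((Bv i : ℚ)) with hBq
  set B : Fin 22 → ℚ := p • Aq + q • Bq with hB
  have hAqA : lamForm ℚ Aq Aq = ((2 * seZ : ℤ) : ℚ) := by rw [hAq, lamForm_intQ, hAA]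
  have hBqA : lamForm ℚ Bq Aq = 0 := by
    rw [hBq, hAq, lamForm_intQ, hBA]; simp
  have hAqB : lamForm ℚ Aq Bq = 0 := by
    rw [hAq, hBq, lamForm_intQ, hAB]; simp
  have hBqB : lamForm ℚ Bq Bq = ((2 * sfZ : ℤ) : ℚ) := by rw [hBq, lamForm_intQ, hBB]
  have hse0 : (2 * (seZ : ℚ)) ≠ 0 := by positivity
  have hsf0 : (2 * (sfZ : ℚ)) ≠ 0 := by positivity
  have hBA' : lamForm ℚ B Aq = (P₁ : ℚ) := by
    rw [hB, lamForm_add_smul_left, lamForm_smul_left, hAqA, hBqA, hp]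
    push_cast
    field_simp
    ring
  have hBB' : lamForm ℚ B Bq = (Q₁ : ℚ) := by
    rw [hB, lamForm_add_smul_left, lamForm_smul_left, hAqB, hBqB, hq]
    push_cast
    field_simp
    ring
  -- cast the B-field pairings to ℂ
  have hcastA : (fun i => ((Aq i : ℚ) : ℂ)) = intVecC A := by
    funext i; rw [hAq]; push_cast; rfl
  have hcastB : (fun i => ((Bq i : ℚ) : ℂ)) = intVecC Bv := by
    funext i; rw [hBq]; push_cast; rfl
  have hlBA : lamForm ℂ (ratVecC B) (intVecC A) = ((P₁ : ℤ) : ℂ) := by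
    rw [← hcastA]
    have h3 := lamForm_map (Rat.castHom ℂ) B Aq
    rw [hBA'] at h3
    have h4 : lamForm ℂ (ratVecC B) (fun i => ((Aq i : ℚ) : ℂ)) = (((P₁ : ℚ) : ℚ) : ℂ) := h3
    rw [h4]
    push_cast
    ring
  have hlBB : lamForm ℂ (ratVecC B) (intVecC Bv) = ((Q₁ : ℤ) : ℂ) := by
    rw [← hcastB]
    have h3 := lamForm_map (Rat.castHom ℂ) B Bq
    rw [hBB'] at h3
    have h4 : lamForm ℂ (ratVecC B) (fun i => ((Bq i : ℚ) : ℂ)) = (((Q₁ : ℚ) : ℚ) : ℂ) := h3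
    rw [h4]
    push_cast
    ring
  have hlBy : lamForm ℂ (ratVecC B) y = ((P₁ : ℤ) : ℂ) + mS * ((Q₁ : ℤ) : ℂ) := by
    rw [hy, lamForm_add_smul_right, hlBA, hlBB]
  -- final assembly
  refine ⟨x, y, B, 1, one_ne_zero, hAx, hAy, ?_⟩
  have hsplit : ((0 : ℂ), x, (0 : ℂ))
      = iMukai ((0:ℤ), e, (0:ℤ)) + mS • iMukai ((0:ℤ), f, (0:ℤ)) := by
    rw [hx]
    simp [iMukai, Prod.ext_iff]
  rw [hsplit, map_add, LinearEquiv.map_smul, hgE, hgF, one_smul]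
  simp only [iMukai, Prod.mk_add_mk, Prod.smul_mk, Prod.mk.injEq, smul_eq_mul]
  refine ⟨by simp, rfl, by rw [hlBy]⟩


end
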